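/- m(ω) tends to 1/2 as ω tends to 0 from the right, i.e. the limit of m along ω → 0 within (0, π) equals 1/2. (Proposition 5.3, limit part.) -/

import Mathlib

/-- `M θ x = cosh((π − θ)x) / (2(1 + cosh(πx)))`. -/
noncomputable def M (θ x : ℝ) : ℝ :=
  Real.cosh ((Real.pi - θ) * x) / (2 * (1 + Real.cosh (Real.pi * x)))

/-- `m θ = sup_{x ∈ ℝ} M θ x`. -/
noncomputable def m (θ : ℝ) : ℝ := ⨆ x : ℝ, M θ x

lemma denom_pos (x : ℝ) : 0 < 2 * (1 + Real.cosh (Real.pi * x)) := by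
  have := Real.cosh_pos (x := Real.pi * x)
  nlinarith

lemma M_le_half {θ : ℝ} (hθ : θ ∈ Set.Ioo 0 Real.pi) (x : ℝ) : M θ x ≤ 1 / 2 := by
  obtain ⟨h0, h1⟩ := hθ
  have hd := denom_pos x
  rw [M, div_le_iff₀ hd]
  have hc : Real.cosh ((Real.pi - θ) * x) ≤ Real.cosh (Real.pi * x) := by
    rw [Real.cosh_le_cosh, abs_mul, abs_mul]
    have h2 : |Real.pi - θ| ≤ |Real.pi| := by
      rw [abs_of_nonneg (by linarith), abs_of_nonneg Real.pi_pos.le]; linarith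
    exact mul_le_mul_of_nonneg_right h2 (abs_nonneg x)
  nlinarith

lemma M_bdd {θ : ℝ} (hθ : θ ∈ Set.Ioo 0 Real.pi) : BddAbove (Set.range (M θ)) :=
  ⟨1 / 2, by rintro _ ⟨x, rfl⟩; exact M_le_half hθ x⟩

lemma m_le_half {θ : ℝ} (hθ : θ ∈ Set.Ioo 0 Real.pi) : m θ ≤ 1 / 2 :=
  ciSup_le fun x => M_le_half hθ x

theorem stmt_3 :
    Filter.Tendsto m (nhdsWithin 0 (Set.Ioo 0 Real.pi)) (nhds (1 / 2)) := by
  rw [Metric.tendsto_nhds]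
  intro ε hε
  -- pick x0 with cosh (π x0) > 1/ε
  set x0 : ℝ := 2 / (ε * Real.pi) with hx0
  have hπ := Real.pi_pos
  have hpx0 : Real.pi * x0 = 2 / ε := by
    rw [hx0]; field_simp
  have hcosh_big : 1 / ε < Real.cosh (Real.pi * x0) := by
    rw [hpx0, Real.cosh_eq]
    have h1 : 1 + 2 / ε ≤ Real.exp (2 / ε) := Real.add_one_le_exp _ |>.trans_eq' (by ring)
    have h2 : 0 ≤ Real.exp (-(2 / ε)) := (Real.exp_pos _).le
    have : 0 < 2 / ε := by positivity
    have h3 : 2 / ε = 2 * (1 / ε) := by ring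
    linarith
  -- M 0 x0 > 1/2 - ε
  have hM0 : 1 / 2 - ε < M 0 x0 := by
    rw [M, sub_zero]
    rw [lt_div_iff₀ (denom_pos x0)]
    have hεinv : ε * (1 / ε) = 1 := by field_simp
    nlinarith [mul_lt_mul_of_pos_left hcosh_big hε, hεinv]
  -- continuity in θ at 0
  have hcont : Filter.Tendsto (fun θ => M θ x0) (nhdsWithin 0 (Set.Ioo 0 Real.pi))
      (nhds (M 0 x0)) := by
    apply Filter.Tendsto.mono_left _ nhdsWithin_le_nhds
    have : Continuous fun θ : ℝ => M θ x0 := by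
      apply Continuous.div
      · exact (Real.continuous_cosh.comp ((continuous_const.sub continuous_id).mul
          continuous_const))
      · exact continuous_const
      · exact fun θ => (denom_pos x0).ne'
    exact this.continuousAt
  have hev : ∀ᶠ θ in nhdsWithin 0 (Set.Ioo 0 Real.pi), 1 / 2 - ε < M θ x0 :=
    hcont.eventually_const_lt hM0
  filter_upwards [hev, self_mem_nhdsWithin] with θ h1 h2
  have hlow : 1 / 2 - ε < m θ :=
    h1.trans_le (le_ciSup (M_bdd h2) x0)
  have hhigh := m_le_half h2
  rw [Real.dist_eq, abs_lt]
  constructor <;> linarith
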